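/- Let N ≥ 1, let S be a standard Young tableau of shape (2^N) (a Young diagram with two columns of length N), and let k ∈ {1,…,2N−2}. Then the symmetrization of the Specht polynomial P_S over the three variables x_k, x_{k+1}, x_{k+2} vanishes: Σ_{σ ∈ ⟨τ_k, τ_{k+1}⟩} σ·P_S = 0, where ⟨τ_k, τ_{k+1}⟩ ≅ S_3 is the subgroup of S_{2N} generated by the transpositions τ_k = (k, k+1) and τ_{k+1} = (k+1, k+2), acting on polynomials by permuting variables. Consequently, the action of ℂ[S_{2N}] on span_ℝ{𝓤_T : T ∈ SYT^{(N,N)}} defined by σ·𝓤_T := Δ(x)^{−1/2} (sgn(σ)σ)·P_{T^t} satisfies the Temperley–Lieb relation 1 − τ_i − τ_{i+1} + τ_iτ_{i+1} + τ_{i+1}τ_i − τ_iτ_{i+1}τ_i = 0 for all i ∈ {1,…,2N−2}, i.e., the representation descends to the Temperley–Lieb quotient of ℂ[S_{2N}]. -/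

import Mathlib

open scoped Classical
open MvPolynomial

noncomputable section

/-- The cells of the Young diagram of shape `(N, N)`: two rows of length `N`. -/
def cellsNN (N : ℕ) : Finset (ℕ × ℕ) := (Finset.range 2) ×ˢ (Finset.range N)

/-- The cells of the Young diagram of shape `(2^N)`: two columns of length `N`. -/
def cellsCol (N : ℕ) : Finset (ℕ × ℕ) := (Finset.range N) ×ˢ (Finset.range 2)

/-- Normalization off the diagram. -/
def ZeroOff (cells : Finset (ℕ × ℕ)) (F : ℕ × ℕ → ℕ) : Prop :=
  ∀ c, c ∉ cells → F c = 0

/-- Standard Young tableaux with the given cells (numberings by `1, …, n`,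
strictly increasing along rows and down columns). -/
def SYTset (n : ℕ) (cells : Finset (ℕ × ℕ)) : Set (ℕ × ℕ → ℕ) :=
  {T | Set.BijOn T ↑cells (Set.Icc 1 n) ∧
    (∀ c ∈ cells, ∀ c' ∈ cells, c.1 = c'.1 → c.2 < c'.2 → T c < T c') ∧
    (∀ c ∈ cells, ∀ c' ∈ cells, c.2 = c'.2 → c.1 < c'.1 → T c < T c') ∧
    ZeroOff cells T}

/-- The Specht polynomial of a numbering: the product over pairs of cells in the same
column of `(x_{Nb(lower)} - x_{Nb(upper)})`. -/
def spechtPoly (cells : Finset (ℕ × ℕ)) (Nb : ℕ × ℕ → ℕ) : MvPolynomial ℕ ℝ :=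
  ∏ p ∈ (cells ×ˢ cells).filter (fun p => p.1.2 = p.2.2 ∧ p.2.1 < p.1.1),
    (X (Nb p.1) - X (Nb p.2))

/-- The Specht polynomial `P_{T^t}` of the transpose of `T ∈ SYT^{(N,N)}`. -/
def spechtTransNN (N : ℕ) (T : ℕ × ℕ → ℕ) : MvPolynomial ℕ ℝ :=
  ∏ p ∈ ((cellsNN N) ×ˢ (cellsNN N)).filter (fun p => p.1.1 = p.2.1 ∧ p.2.2 < p.1.2),
    (X (T p.1) - X (T p.2))

/-- Evaluation of a polynomial in the 1-based variables `x_1, …, x_m` at `x : Fin m → ℝ`. -/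
def evalAt (m : ℕ) (x : Fin m → ℝ) : MvPolynomial ℕ ℝ → ℝ :=
  MvPolynomial.eval fun k => if h : 1 ≤ k ∧ k ≤ m then x ⟨k - 1, by omega⟩ else 0

/-- The Vandermonde product. -/
def vandProd (m : ℕ) (x : Fin m → ℝ) : ℝ :=
  ∏ p ∈ Finset.univ.filter (fun p : Fin m × Fin m => p.1 < p.2), (x p.2 - x p.1)

/-- The chamber `𝔛_m`. -/
def chamber (m : ℕ) : Set (Fin m → ℝ) := {x | StrictMono x}

/-- Extension of a permutation of `Fin n` to the 1-based letters `{1, …, n} ⊆ ℕ`. -/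
def extendPerm (n : ℕ) (σ : Equiv.Perm (Fin n)) : ℕ → ℕ :=
  fun i => if h : 1 ≤ i ∧ i ≤ n then ((σ ⟨i - 1, by omega⟩ : Fin n) : ℕ) + 1 else i

/-- adjacent-row antisymmetry -/
lemma rename_specht_adj (N : ℕ) (S : ℕ × ℕ → ℕ) (hinj : Set.InjOn S ↑(cellsCol N))
    (r j : ℕ) (hr : r + 1 < N) (hj : j < 2) :
    MvPolynomial.rename (⇑(Equiv.swap (S (r, j)) (S (r + 1, j)))) (spechtPoly (cellsCol N) S)
      = - spechtPoly (cellsCol N) S := by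
  classical
  set ca : ℕ × ℕ := (r, j) with hca
  set cb : ℕ × ℕ := (r + 1, j) with hcb
  have hcaM : ca ∈ cellsCol N := by
    simp only [cellsCol, hca, Finset.mem_product, Finset.mem_range]; omega
  have hcbM : cb ∈ cellsCol N := by
    simp only [cellsCol, hcb, Finset.mem_product, Finset.mem_range]; omega
  have hne : ca ≠ cb := by simp [hca, hcb]
  have hne' : cb ≠ ca := hne.symm
  set w : Equiv.Perm ℕ := Equiv.swap (S ca) (S cb) with hw
  set f : ℕ × ℕ → ℕ × ℕ := fun c => if c = ca then cb else if c = cb then ca else c with hf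
  have hws : ∀ c ∈ cellsCol N, w (S c) = S (f c) := by
    intro c hc
    by_cases h1 : c = ca
    · simp [hf, h1, hne', hw, Equiv.swap_apply_left]
    by_cases h2 : c = cb
    · simp [hf, h1, h2, hne', hw, Equiv.swap_apply_right]
    · have hna : S c ≠ S ca := fun h => h1 (hinj hc hcaM h)
      have hnb : S c ≠ S cb := fun h => h2 (hinj hc hcbM h)
      simp [hf, h1, h2, hw, Equiv.swap_apply_of_ne_of_ne hna hnb]
  set F := ((cellsCol N) ×ˢ (cellsCol N)).filter
      (fun p => p.1.2 = p.2.2 ∧ p.2.1 < p.1.1) with hF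
  have hmemF : ∀ p : (ℕ×ℕ)×(ℕ×ℕ), p ∈ F ↔
      (p.1 ∈ cellsCol N ∧ p.2 ∈ cellsCol N ∧ p.1.2 = p.2.2 ∧ p.2.1 < p.1.1) := by
    intro p
    simp [hF, Finset.mem_filter, Finset.mem_product, and_assoc]
  set p0 : (ℕ×ℕ)×(ℕ×ℕ) := (cb, ca) with hp0
  have hp0F : p0 ∈ F := by
    rw [hmemF]; exact ⟨hcbM, hcaM, rfl, by show r < r + 1; omega⟩
  have hren : MvPolynomial.rename (⇑w) (spechtPoly (cellsCol N) S)
      = ∏ p ∈ F, (X (w (S p.1)) - X (w (S p.2))) := by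
    rw [spechtPoly, map_prod]
    exact Finset.prod_congr rfl fun p _ => by rw [map_sub, rename_X, rename_X]
  have cellmem : ∀ c : ℕ × ℕ, c ∈ cellsCol N ↔ (c.1 < N ∧ c.2 < 2) := by
    intro c; simp [cellsCol, Finset.mem_product]
  set e : (ℕ×ℕ)×(ℕ×ℕ) → (ℕ×ℕ)×(ℕ×ℕ) := fun p => (f p.1, f p.2) with he
  have hfcell : ∀ c ∈ cellsCol N, f c ∈ cellsCol N := by
    intro c hc
    by_cases h1 : c = ca
    · simpa [hf, h1, hne'] using hcbM
    by_cases h2 : c = cb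
    · simpa [hf, h1, h2, hne'] using hcaM
    · simpa [hf, h1, h2] using hc
  have hfa : ∀ c, f c = cb → c = ca := by
    intro c h
    by_cases h1 : c = ca
    · exact h1
    exfalso
    by_cases h2 : c = cb
    · rw [hf] at h; simp only [if_neg h1, if_pos h2] at h; exact hne h
    · rw [hf] at h; simp only [if_neg h1, if_neg h2] at h; exact h2 h
  have hfb : ∀ c, f c = ca → c = cb := by
    intro c h
    by_cases h1 : c = ca
    · exfalso; rw [hf] at h; simp only [if_pos h1] at h; exact hne' h
    by_cases h2 : c = cb
    · exact h2
    · exfalso; rw [hf] at h; simp only [if_neg h1, if_neg h2] at h; exact h1 h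
  have colf : ∀ c, (f c).2 = c.2 := by
    intro c
    by_cases h1 : c = ca
    · simp [hf, h1, hca, hcb]
    by_cases h2 : c = cb
    · simp [hf, h1, h2, hca, hcb]
    · simp [hf, h1, h2]
  have hestep : ∀ p ∈ F.erase p0, e p ∈ F.erase p0 := by
    intro p hp
    obtain ⟨hpne, hpF⟩ := Finset.mem_erase.mp hp
    rw [hmemF] at hpF
    obtain ⟨h1, h2, hcol, hrow⟩ := hpF
    rw [Finset.mem_erase, hmemF]
    have hepne : e p ≠ p0 := by
      intro hcontra
      have e1 : p.1 = ca := hfa _ (congrArg Prod.fst hcontra)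
      have e2 : p.2 = cb := hfb _ (congrArg Prod.snd hcontra)
      rw [e1, e2, hca, hcb] at hrow
      simp at hrow
    refine ⟨hepne, hfcell _ h1, hfcell _ h2, by simp only [he]; rw [colf, colf, hcol], ?_⟩
    show (f p.2).1 < (f p.1).1
    by_cases a1 : p.1 = ca
    · have ha2 : p.2 ≠ ca := by
        intro h; rw [a1, h] at hrow; omega
      have hb2 : p.2 ≠ cb := by
        intro h; rw [a1, h, hca, hcb] at hrow; simp at hrow
      have : p.2.1 < r := by
        have := hrow; rw [a1, hca] at this; simpa using this
      simp only [hf, a1, if_pos rfl, if_neg ha2, if_neg hb2,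
        if_neg (show p.2 ≠ (r + 1, j) from hb2), hcb]
      try simp only [eq_self_iff_true, if_true]
      omega
    by_cases b1 : p.1 = cb
    · have ha2 : p.2 ≠ ca := by
        intro h; exact hpne (by rw [hp0, ← b1, ← h])
      have hb2 : p.2 ≠ cb := by
        intro h; rw [b1, h] at hrow; omega
      have hcolp : p.2.2 = j := by
        have := hcol; rw [b1, hcb] at this; simpa using this.symm
      have hlt : p.2.1 < r + 1 := by
        have := hrow; rw [b1, hcb] at this; simpa using this
      have : p.2.1 ≠ r := fun h => ha2 (by rw [hca]; exact Prod.ext h hcolp)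
      simp only [hf, b1, if_neg hne', if_pos rfl, if_neg ha2, if_neg hb2,
        if_neg (show cb ≠ (r, j) from hne'), if_neg (show p.2 ≠ (r, j) from ha2), hca]
      try simp only [eq_self_iff_true, if_true]
      omega
    · simp only [hf, if_neg a1, if_neg b1]
      by_cases a2 : p.2 = ca
      · have hcolp : p.1.2 = j := by
          have := hcol; rw [a2, hca] at this; simpa using this
        have hgt : r < p.1.1 := by
          have := hrow; rw [a2, hca] at this; simpa using this
        have : p.1.1 ≠ r + 1 := fun h => b1 (by rw [hcb]; exact Prod.ext h hcolp)
        simp only [a2, if_pos rfl, hcb]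
        try simp only [eq_self_iff_true, if_true]
        omega
      by_cases b2 : p.2 = cb
      · have hgt : r + 1 < p.1.1 := by
          have := hrow; rw [b2, hcb] at this; simpa using this
        simp only [b2, if_neg hne', if_pos rfl, if_neg (show cb ≠ (r, j) from hne'), hca]
        try simp only [eq_self_iff_true, if_true]
        omega
      · simp only [if_neg a2, if_neg b2]; exact hrow
  have hff : ∀ c, f (f c) = c := by
    intro c
    by_cases h1 : c = ca
    · simp [hf, h1, hne', hne]
    by_cases h2 : c = cb
    · simp [hf, h1, h2, hne', hne]
    · simp [hf, h1, h2]
  have hee : ∀ p, e (e p) = p := by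
    intro p; simp [he, hff]
  have hprod : ∏ p ∈ F.erase p0, (X (w (S p.1)) - X (w (S p.2)) : MvPolynomial ℕ ℝ)
      = ∏ p ∈ F.erase p0, (X (S p.1) - X (S p.2)) := by
    apply Finset.prod_nbij' e e hestep hestep (fun p _ => hee p) (fun p _ => hee p)
    intro p hp
    have hpF := (Finset.mem_erase.mp hp).2
    rw [hmemF] at hpF
    show (X (w (S p.1)) - X (w (S p.2)) : MvPolynomial ℕ ℝ) = _
    rw [hws _ hpF.1, hws _ hpF.2.1]
  rw [hren]
  conv_rhs => rw [spechtPoly, ← hF]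
  rw [← Finset.prod_erase_mul F _ hp0F, ← Finset.prod_erase_mul F _ hp0F]
  rw [hprod]
  have hlast : (X (w (S p0.1)) - X (w (S p0.2)) : MvPolynomial ℕ ℝ)
      = - (X (S p0.1) - X (S p0.2)) := by
    show (X (w (S cb)) - X (w (S ca)) : MvPolynomial ℕ ℝ) = - (X (S cb) - X (S ca))
    rw [hw, Equiv.swap_apply_right, Equiv.swap_apply_left]
    ring
  rw [hlast]; ring

/-- same-column antisymmetry -/
lemma rename_specht_col (N : ℕ) (S : ℕ × ℕ → ℕ) (hinj : Set.InjOn S ↑(cellsCol N))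
    (r s j : ℕ) (hrs : r < s) (hs : s < N) (hj : j < 2) :
    MvPolynomial.rename (⇑(Equiv.swap (S (r, j)) (S (s, j)))) (spechtPoly (cellsCol N) S)
      = - spechtPoly (cellsCol N) S := by
  induction s with
  | zero => omega
  | succ m ih =>
    by_cases hm : r = m
    · subst hm; exact rename_specht_adj N S hinj r j hs hj
    · have hrm : r < m := by omega
      have hmN : m < N := by omega
      -- swap (S(r,j)) (S(m+1,j)) = w * swap (S(r,j)) (S(m,j)) * w, w = swap (S(m,j)) (S(m+1,j))
      set w : Equiv.Perm ℕ := Equiv.swap (S (m, j)) (S (m + 1, j)) with hw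
      have hma : (m, j) ∈ cellsCol N := by
        simp only [cellsCol, Finset.mem_product, Finset.mem_range]; omega
      have hmb : ((m+1 : ℕ), j) ∈ cellsCol N := by
        simp only [cellsCol, Finset.mem_product, Finset.mem_range]; omega
      have hra : (r, j) ∈ cellsCol N := by
        simp only [cellsCol, Finset.mem_product, Finset.mem_range]; omega
      have h1 : S (r, j) ≠ S (m, j) := by
        intro h; have := hinj hra hma h; simp at this; omega
      have h2 : S (r, j) ≠ S (m + 1, j) := by
        intro h; have := hinj hra hmb h; simp at this; omega
      have key : Equiv.swap (S (r, j)) (S (m + 1, j))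
          = w * Equiv.swap (S (r, j)) (S (m, j)) * w⁻¹ := by
        rw [← Equiv.swap_apply_apply]
        congr 1
        · exact (Equiv.swap_apply_of_ne_of_ne h1 h2).symm
        · exact (Equiv.swap_apply_left _ _).symm
      have hwinv : w⁻¹ = w := by rw [hw, Equiv.swap_inv]
      rw [key, hwinv]
      have comp1 : ∀ (u v : Equiv.Perm ℕ) (P : MvPolynomial ℕ ℝ),
          MvPolynomial.rename (⇑(u * v)) P
            = MvPolynomial.rename (⇑u) (MvPolynomial.rename (⇑v) P) := by
        intro u v P; rw [rename_rename]; rfl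
      rw [comp1, comp1, rename_specht_adj N S hinj m j (by omega) hj, map_neg, map_neg,
        ih hrm hmN, map_neg, rename_specht_adj N S hinj m j (by omega) hj]
      simp

/-- unordered version -/
lemma rename_specht_two (N : ℕ) (S : ℕ × ℕ → ℕ) (hinj : Set.InjOn S ↑(cellsCol N))
    (c c' : ℕ × ℕ) (hc : c ∈ cellsCol N) (hc' : c' ∈ cellsCol N) (hcol : c.2 = c'.2)
    (hne : c ≠ c') :
    MvPolynomial.rename (⇑(Equiv.swap (S c) (S c'))) (spechtPoly (cellsCol N) S)
      = - spechtPoly (cellsCol N) S := by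
  have hcm : c.1 < N ∧ c.2 < 2 := by
    simpa [cellsCol, Finset.mem_product] using hc
  have hcm' : c'.1 < N ∧ c'.2 < 2 := by
    simpa [cellsCol, Finset.mem_product] using hc'
  have hrne : c.1 ≠ c'.1 := by
    intro h; exact hne (Prod.ext h hcol)
  rcases lt_or_gt_of_ne hrne with h | h
  · have := rename_specht_col N S hinj c.1 c'.1 c.2 h (by omega) hcm.2
    have e2 : (c'.1, c.2) = c' := by rw [hcol]
    rw [e2, Prod.mk.eta] at this
    exact this
  · have := rename_specht_col N S hinj c'.1 c.1 c'.2 h (by omega) hcm'.2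
    have e2 : (c.1, c'.2) = c := by rw [← hcol]
    rw [e2, Prod.mk.eta, Equiv.swap_comm] at this
    exact this

lemma swap_mem_closure (k a b : ℕ) (ha : a = k ∨ a = k + 1 ∨ a = k + 2)
    (hb : b = k ∨ b = k + 1 ∨ b = k + 2) (hab : a ≠ b) :
    Equiv.swap a b ∈ Subgroup.closure
      ({Equiv.swap k (k + 1), Equiv.swap (k + 1) (k + 2)} : Set (Equiv.Perm ℕ)) := by
  set G := Subgroup.closure
      ({Equiv.swap k (k + 1), Equiv.swap (k + 1) (k + 2)} : Set (Equiv.Perm ℕ)) with hG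
  have h1 : Equiv.swap k (k + 1) ∈ G := Subgroup.subset_closure (by simp)
  have h2 : Equiv.swap (k + 1) (k + 2) ∈ G := Subgroup.subset_closure (by simp)
  have h3 : Equiv.swap k (k + 2) ∈ G := by
    have key : Equiv.swap k (k + 2)
        = Equiv.swap k (k+1) * Equiv.swap (k+1) (k+2) * (Equiv.swap k (k+1))⁻¹ := by
      rw [← Equiv.swap_apply_apply]
      congr 1
      · exact (Equiv.swap_apply_right _ _).symm
      · exact (Equiv.swap_apply_of_ne_of_ne (by omega) (by omega)).symm
    rw [key]
    exact mul_mem (mul_mem h1 h2) (inv_mem h1)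
  rcases ha with rfl | rfl | rfl <;> rcases hb with rfl | rfl | rfl <;>
    first
      | exact absurd rfl hab
      | exact h1
      | exact h2
      | exact h3
      | (rw [Equiv.swap_comm]; first | exact h1 | exact h2 | exact h3)

lemma part1_general (N : ℕ) (k : ℕ) (P : MvPolynomial ℕ ℝ)
    (t : Equiv.Perm ℕ)
    (htG : t ∈ Subgroup.closure
      ({Equiv.swap k (k + 1), Equiv.swap (k + 1) (k + 2)} : Set (Equiv.Perm ℕ)))
    (htP : MvPolynomial.rename (⇑t) P = -P) :
    (∑ᶠ σ ∈ ((Subgroup.closure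
        ({Equiv.swap k (k + 1), Equiv.swap (k + 1) (k + 2)} :
          Set (Equiv.Perm ℕ))) : Set (Equiv.Perm ℕ)),
        MvPolynomial.rename (⇑σ) P) = 0 := by
  set G := Subgroup.closure
      ({Equiv.swap k (k + 1), Equiv.swap (k + 1) (k + 2)} : Set (Equiv.Perm ℕ)) with hG
  set F : Equiv.Perm ℕ → MvPolynomial ℕ ℝ := fun σ => MvPolynomial.rename (⇑σ) P with hFdef
  have hbij : Set.BijOn (fun σ => σ * t) (G : Set (Equiv.Perm ℕ)) (G : Set (Equiv.Perm ℕ)) := by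
    refine ⟨fun σ hσ => mul_mem hσ htG, fun σ _ τ _ h => by
      simpa using mul_right_cancel h, fun σ hσ => ⟨σ * t⁻¹, mul_mem hσ (inv_mem htG), by simp⟩⟩
  have key : ∀ σ : Equiv.Perm ℕ, F (σ * t) = - F σ := by
    intro σ
    have : (⇑(σ * t) : ℕ → ℕ) = ⇑σ ∘ ⇑t := rfl
    rw [hFdef]
    simp only [this]
    rw [← MvPolynomial.rename_rename, htP, map_neg]
  have heq : (∑ᶠ σ ∈ (G : Set (Equiv.Perm ℕ)), (-(F σ))) = ∑ᶠ σ ∈ (G : Set (Equiv.Perm ℕ)), F σ := by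
    apply finsum_mem_eq_of_bijOn (fun σ => σ * t) hbij
    intro σ _
    rw [key σ]
  have hneg : (∑ᶠ σ ∈ (G : Set (Equiv.Perm ℕ)), (-(F σ)))
      = - ∑ᶠ σ ∈ (G : Set (Equiv.Perm ℕ)), F σ := by
    rw [finsum_mem_def, finsum_mem_def, ← finsum_neg_distrib]
    congr 1
    funext σ
    rw [Set.indicator_neg]
  set A := ∑ᶠ σ ∈ (G : Set (Equiv.Perm ℕ)), F σ with hA
  have : -A = A := by rw [← hneg, heq]
  have h2 : A + A = 0 := by nth_rewrite 1 [← this]; simp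
  have := add_self_eq_zero.mp h2
  exact this

lemma specht_trans_eq (N : ℕ) (T : ℕ × ℕ → ℕ) :
    spechtTransNN N T = spechtPoly (cellsCol N) (fun c => T (c.2, c.1)) := by
  rw [spechtTransNN, spechtPoly]
  apply Finset.prod_nbij' (fun p : (ℕ×ℕ)×(ℕ×ℕ) => ((p.1.2, p.1.1), (p.2.2, p.2.1)))
    (fun p : (ℕ×ℕ)×(ℕ×ℕ) => ((p.1.2, p.1.1), (p.2.2, p.2.1)))
  · intro p hp
    simp only [Finset.mem_filter, Finset.mem_product, cellsNN, cellsCol,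
      Finset.mem_range] at hp ⊢
    tauto
  · intro p hp
    simp only [Finset.mem_filter, Finset.mem_product, cellsNN, cellsCol,
      Finset.mem_range] at hp ⊢
    tauto
  · intro p _; rfl
  · intro p _; rfl
  · intro p _; rfl

lemma extendPerm_one (n : ℕ) : extendPerm n 1 = id := by
  funext i
  by_cases h : 1 ≤ i ∧ i ≤ n
  · simp only [extendPerm, dif_pos h, Equiv.Perm.coe_one, id_eq]
    omega
  · simp [extendPerm, dif_neg h]

lemma extendPerm_mul (n : ℕ) (σ τ : Equiv.Perm (Fin n)) :
    extendPerm n (σ * τ) = extendPerm n σ ∘ extendPerm n τ := by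
  funext i
  by_cases h : 1 ≤ i ∧ i ≤ n
  · have hτ : 1 ≤ ((τ ⟨i - 1, by omega⟩ : Fin n) : ℕ) + 1 ∧
        ((τ ⟨i - 1, by omega⟩ : Fin n) : ℕ) + 1 ≤ n := by
      constructor
      · omega
      · have := (τ ⟨i - 1, by omega⟩).isLt; omega
    simp only [Function.comp_apply, extendPerm, dif_pos h, dif_pos hτ,
      Equiv.Perm.coe_mul]
    have h0 : (⟨((τ ⟨i - 1, by omega⟩ : Fin n) : ℕ) + 1 - 1, by omega⟩ : Fin n)
        = τ ⟨i - 1, by omega⟩ := by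
      apply Fin.ext; simp
    rw [h0]
  · simp [Function.comp_apply, extendPerm, dif_neg h]

lemma extendPerm_swap (n i j : ℕ) (hi : i < n) (hj : j < n) :
    extendPerm n (Equiv.swap ⟨i, hi⟩ ⟨j, hj⟩) = ⇑(Equiv.swap (i + 1) (j + 1)) := by
  funext m
  by_cases h : 1 ≤ m ∧ m ≤ n
  · simp only [extendPerm, dif_pos h]
    rcases eq_or_ne m (i + 1) with hm | hmi
    · have h0 : (⟨m - 1, by omega⟩ : Fin n) = ⟨i, hi⟩ := by apply Fin.ext; simp; omega
      rw [h0, Equiv.swap_apply_left, hm, Equiv.swap_apply_left]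
    rcases eq_or_ne m (j + 1) with hm | hmj
    · have h0 : (⟨m - 1, by omega⟩ : Fin n) = ⟨j, hj⟩ := by apply Fin.ext; simp; omega
      rw [h0, Equiv.swap_apply_right, hm, Equiv.swap_apply_right]
    · have h1 : (⟨m - 1, by omega⟩ : Fin n) ≠ ⟨i, hi⟩ := by
        intro hc; apply hmi; have := congrArg Fin.val hc; simp at this; omega
      have h2 : (⟨m - 1, by omega⟩ : Fin n) ≠ ⟨j, hj⟩ := by
        intro hc; apply hmj; have := congrArg Fin.val hc; simp at this; omega
      rw [Equiv.swap_apply_of_ne_of_ne h1 h2, Equiv.swap_apply_of_ne_of_ne hmi hmj]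
      simp; omega
  · have h1 : m ≠ i + 1 := by omega
    have h2 : m ≠ j + 1 := by omega
    rw [extendPerm, dif_neg h, Equiv.swap_apply_of_ne_of_ne h1 h2]

lemma sixsum (k : ℕ) (Q : MvPolynomial ℕ ℝ)
    (hex : ∃ a b : ℕ, (a = k ∨ a = k + 1 ∨ a = k + 2) ∧ (b = k ∨ b = k + 1 ∨ b = k + 2) ∧
      a ≠ b ∧ MvPolynomial.rename (⇑(Equiv.swap a b)) Q = -Q) :
    MvPolynomial.rename (⇑(1 : Equiv.Perm ℕ)) Q
      + MvPolynomial.rename (⇑(Equiv.swap k (k + 1))) Q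
      + MvPolynomial.rename (⇑(Equiv.swap (k + 1) (k + 2))) Q
      + MvPolynomial.rename (⇑(Equiv.swap k (k + 1) * Equiv.swap (k + 1) (k + 2))) Q
      + MvPolynomial.rename (⇑(Equiv.swap (k + 1) (k + 2) * Equiv.swap k (k + 1))) Q
      + MvPolynomial.rename
          (⇑(Equiv.swap k (k + 1) * Equiv.swap (k + 1) (k + 2) * Equiv.swap k (k + 1))) Q
      = 0 := by
  set u1 : Equiv.Perm ℕ := Equiv.swap k (k + 1) with hu1
  set u2 : Equiv.Perm ℕ := Equiv.swap (k + 1) (k + 2) with hu2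
  set u3 : Equiv.Perm ℕ := Equiv.swap k (k + 2) with hu3
  have hbraid1 : u1 * u2 * u1 = u3 := by
    rw [hu1, hu2, hu3]
    have : Equiv.swap k (k+2)
        = Equiv.swap k (k+1) * Equiv.swap (k+1) (k+2) * (Equiv.swap k (k+1))⁻¹ := by
      rw [← Equiv.swap_apply_apply]
      congr 1
      · exact (Equiv.swap_apply_right _ _).symm
      · exact (Equiv.swap_apply_of_ne_of_ne (by omega) (by omega)).symm
    rw [this, Equiv.swap_inv]
  have hbraid2 : u2 * u1 * u2 = u3 := by
    rw [hu1, hu2, hu3]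
    have : Equiv.swap k (k+2)
        = Equiv.swap (k+1) (k+2) * Equiv.swap k (k+1) * (Equiv.swap (k+1) (k+2))⁻¹ := by
      rw [← Equiv.swap_apply_apply]
      congr 1
      · exact (Equiv.swap_apply_of_ne_of_ne (by omega) (by omega)).symm
      · exact (Equiv.swap_apply_left _ _).symm
    rw [this, Equiv.swap_inv]
  have hu1sq : u1 * u1 = 1 := by rw [hu1, Equiv.swap_mul_self]
  have hu2sq : u2 * u2 = 1 := by rw [hu2, Equiv.swap_mul_self]
  have comp1 : ∀ (u v : Equiv.Perm ℕ) (P : MvPolynomial ℕ ℝ),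
      MvPolynomial.rename (⇑(u * v)) P
        = MvPolynomial.rename (⇑u) (MvPolynomial.rename (⇑v) P) := by
    intro u v P; rw [MvPolynomial.rename_rename]; rfl
  have hrone : MvPolynomial.rename (⇑(1 : Equiv.Perm ℕ)) Q = Q := by
    have : (⇑(1 : Equiv.Perm ℕ) : ℕ → ℕ) = id := rfl
    rw [this, MvPolynomial.rename_id, AlgHom.id_apply]
  -- reduce hex to one of three cases
  obtain ⟨a, b, ha, hb, hab, hren⟩ := hex
  have hcase : MvPolynomial.rename (⇑u1) Q = -Q ∨ MvPolynomial.rename (⇑u2) Q = -Q ∨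
      MvPolynomial.rename (⇑u3) Q = -Q := by
    rcases ha with rfl | rfl | rfl <;> rcases hb with rfl | rfl | rfl <;>
      first
        | exact absurd rfl hab
        | (left; exact hren)
        | (right; left; exact hren)
        | (right; right; exact hren)
        | (rw [Equiv.swap_comm] at hren;
           first
             | (left; exact hren)
             | (right; left; exact hren)
             | (right; right; exact hren))
  rw [hrone]
  rcases hcase with h | h | h
  · rw [comp1 u2 u1, comp1 (u1 * u2) u1, h]
    rw [show u1 * u2 * u1 = (u1 * u2) * u1 from rfl] at *
    simp only [map_neg]
    abel
  · have e1 : u1 * u2 * u1 = u2 * u1 * u2 := by rw [hbraid1, hbraid2]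
    rw [e1, comp1 u1 u2, comp1 (u2 * u1) u2, h]
    simp only [map_neg]
    abel
  · have e2 : u2 * u1 = u1 * u3 := by
      rw [← hbraid1, show u1 * (u1 * u2 * u1) = (u1 * u1) * (u2 * u1) by group, hu1sq, one_mul]
    have e3 : u1 * u2 = u2 * u3 := by
      rw [← hbraid2, show u2 * (u2 * u1 * u2) = (u2 * u2) * (u1 * u2) by group, hu2sq, one_mul]
    have e4 : u1 * u2 * u1 = u3 := hbraid1
    rw [e4, e2, e3, comp1 u1 u3, comp1 u2 u3, h]
    simp only [map_neg]
    abel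

lemma exists_neg_swap (N k : ℕ) (hk1 : 1 ≤ k) (hk2 : k + 2 ≤ 2 * N)
    (S : ℕ × ℕ → ℕ) (hbij : Set.BijOn S ↑(cellsCol N) (Set.Icc 1 (2 * N))) :
    ∃ a b : ℕ, (a = k ∨ a = k + 1 ∨ a = k + 2) ∧ (b = k ∨ b = k + 1 ∨ b = k + 2) ∧ a ≠ b ∧
      MvPolynomial.rename (⇑(Equiv.swap a b)) (spechtPoly (cellsCol N) S)
        = - spechtPoly (cellsCol N) S := by
  have hinj := hbij.injOn
  obtain ⟨c1, hc1, e1⟩ := hbij.surjOn (show (k : ℕ) ∈ Set.Icc 1 (2 * N) by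
    simp only [Set.mem_Icc]; omega)
  obtain ⟨c2, hc2, e2⟩ := hbij.surjOn (show (k + 1 : ℕ) ∈ Set.Icc 1 (2 * N) by
    simp only [Set.mem_Icc]; omega)
  obtain ⟨c3, hc3, e3⟩ := hbij.surjOn (show (k + 2 : ℕ) ∈ Set.Icc 1 (2 * N) by
    simp only [Set.mem_Icc]; omega)
  have hc1' : c1 ∈ cellsCol N := hc1
  have hc2' : c2 ∈ cellsCol N := hc2
  have hc3' : c3 ∈ cellsCol N := hc3
  have hcol1 : c1.2 < 2 := by
    simpa [cellsCol, Finset.mem_product] using (And.right (by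
      simpa [cellsCol, Finset.mem_product] using hc1' : c1.1 < N ∧ c1.2 < 2))
  have hcol2 : c2.2 < 2 := (by
      simpa [cellsCol, Finset.mem_product] using hc2' : c2.1 < N ∧ c2.2 < 2).2
  have hcol3 : c3.2 < 2 := (by
      simpa [cellsCol, Finset.mem_product] using hc3' : c3.1 < N ∧ c3.2 < 2).2
  by_cases h12 : c1.2 = c2.2
  · have hne : c1 ≠ c2 := by
      intro h; rw [h, e2] at e1; omega
    exact ⟨k, k + 1, Or.inl rfl, Or.inr (Or.inl rfl), by omega, by
      rw [← e2, ← e1]; exact rename_specht_two N S hinj c1 c2 hc1' hc2' h12 hne⟩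
  by_cases h13 : c1.2 = c3.2
  · have hne : c1 ≠ c3 := by
      intro h; rw [h, e3] at e1; omega
    exact ⟨k, k + 2, Or.inl rfl, Or.inr (Or.inr rfl), by omega, by
      rw [← e3, ← e1]; exact rename_specht_two N S hinj c1 c3 hc1' hc3' h13 hne⟩
  · have h23 : c2.2 = c3.2 := by omega
    have hne : c2 ≠ c3 := by
      intro h; rw [h, e3] at e2; omega
    exact ⟨k + 1, k + 2, Or.inr (Or.inl rfl), Or.inr (Or.inr rfl), by omega, by
      rw [← e3, ← e2]; exact rename_specht_two N S hinj c2 c3 hc2' hc3' h23 hne⟩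

/-- For a standard Young tableau `S` of shape `(2^N)` and
`k ∈ {1, …, 2N-2}`, the symmetrization of the Specht polynomial `P_S` over the variables
`x_k, x_{k+1}, x_{k+2}` vanishes; consequently, the `ℂ[S_{2N}]`-action
`σ · 𝓤_T := Δ(x)^{-1/2} (sgn σ) σ · P_{T^t}` on the span of the conformal block functions
satisfies the Temperley–Lieb relation
`1 - τ_i - τ_{i+1} + τ_i τ_{i+1} + τ_{i+1} τ_i - τ_i τ_{i+1} τ_i = 0`. -/
theorem specht_symmetrization_and_TL_relation
    (N : ℕ) (hN : 0 < N) (k : ℕ) (hk1 : 1 ≤ k) (hk2 : k ≤ 2 * N - 2)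
    (S : ℕ × ℕ → ℕ) (hS : S ∈ SYTset (2 * N) (cellsCol N)) :
    (∑ᶠ σ ∈ ((Subgroup.closure
        ({Equiv.swap k (k + 1), Equiv.swap (k + 1) (k + 2)} :
          Set (Equiv.Perm ℕ))) : Set (Equiv.Perm ℕ)),
        MvPolynomial.rename (⇑σ) (spechtPoly (cellsCol N) S)) = 0 ∧
    (∀ T ∈ SYTset (2 * N) (cellsNN N), ∀ x ∈ chamber (2 * N),
      let t1 : Equiv.Perm (Fin (2 * N)) := Equiv.swap ⟨k - 1, by omega⟩ ⟨k, by omega⟩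
      let t2 : Equiv.Perm (Fin (2 * N)) := Equiv.swap ⟨k, by omega⟩ ⟨k + 1, by omega⟩
      let g : Equiv.Perm (Fin (2 * N)) → ℝ := fun σ =>
        ((Equiv.Perm.sign σ : ℤ) : ℝ) *
          evalAt (2 * N) x (MvPolynomial.rename (extendPerm (2 * N) σ) (spechtTransNN N T)) /
          Real.sqrt (vandProd (2 * N) x)
      g 1 - g t1 - g t2 + g (t1 * t2) + g (t2 * t1) - g (t1 * t2 * t1) = 0) := by
  have hk2' : k + 2 ≤ 2 * N := by omega
  constructor
  · obtain ⟨a, b, ha, hb, hab, hren⟩ := exists_neg_swap N k hk1 hk2' S hS.1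
    exact part1_general N k _ (Equiv.swap a b) (swap_mem_closure k a b ha hb hab) hren
  · intro T hT x hx
    intro t1 t2 g
    set T' : ℕ × ℕ → ℕ := fun c => T (c.2, c.1) with hT'
    have hswapmaps : ∀ c : ℕ × ℕ, c ∈ (cellsCol N : Set (ℕ × ℕ)) ↔
        ((c.2, c.1) : ℕ × ℕ) ∈ (cellsNN N : Set (ℕ × ℕ)) := by
      intro c
      simp only [Finset.coe_sort_coe, Finset.mem_coe, cellsCol, cellsNN,
        Finset.mem_product, Finset.mem_range]
      tauto
    have hbij' : Set.BijOn T' ↑(cellsCol N) (Set.Icc 1 (2 * N)) := by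
      refine ⟨fun c hc => hT.1.mapsTo ((hswapmaps c).mp hc), ?_, ?_⟩
      · intro c hc c' hc' h
        have := hT.1.injOn ((hswapmaps c).mp hc) ((hswapmaps c').mp hc') h
        have h1 := congrArg Prod.fst this
        have h2 := congrArg Prod.snd this
        simp only at h1 h2
        exact Prod.ext h2 h1
      · intro v hv
        obtain ⟨d, hd, hdv⟩ := hT.1.surjOn hv
        refine ⟨(d.2, d.1), ?_, ?_⟩
        · have := (hswapmaps (d.2, d.1)).mpr
          simp only at this
          exact this (by simpa using hd)
        · simpa [hT'] using hdv
    obtain ⟨a, b, ha, hb, hab, hren⟩ := exists_neg_swap N k hk1 hk2' T' hbij'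
    have hsix := sixsum k (spechtPoly (cellsCol N) T') ⟨a, b, ha, hb, hab, hren⟩
    have hQ : spechtTransNN N T = spechtPoly (cellsCol N) T' := specht_trans_eq N T
    -- extendPerm computations
    have hne1 : (⟨k - 1, by omega⟩ : Fin (2 * N)) ≠ ⟨k, by omega⟩ := by
      simp only [ne_eq, Fin.mk.injEq]; omega
    have hne2 : (⟨k, by omega⟩ : Fin (2 * N)) ≠ ⟨k + 1, by omega⟩ := by
      simp only [ne_eq, Fin.mk.injEq]; omega
    have ht1 : t1 = Equiv.swap ⟨k - 1, by omega⟩ ⟨k, by omega⟩ := rfl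
    have ht2 : t2 = Equiv.swap ⟨k, by omega⟩ ⟨k + 1, by omega⟩ := rfl
    have hE1 : extendPerm (2 * N) t1 = ⇑(Equiv.swap k (k + 1)) := by
      rw [ht1, extendPerm_swap (2 * N) (k - 1) k (by omega) (by omega),
        show k - 1 + 1 = k from by omega]
    have hE2 : extendPerm (2 * N) t2 = ⇑(Equiv.swap (k + 1) (k + 2)) := by
      rw [ht2, extendPerm_swap (2 * N) k (k + 1) (by omega) (by omega)]
    have hE12 : extendPerm (2 * N) (t1 * t2)
        = ⇑(Equiv.swap k (k + 1) * Equiv.swap (k + 1) (k + 2)) := by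
      rw [extendPerm_mul, hE1, hE2]; rfl
    have hE21 : extendPerm (2 * N) (t2 * t1)
        = ⇑(Equiv.swap (k + 1) (k + 2) * Equiv.swap k (k + 1)) := by
      rw [extendPerm_mul, hE1, hE2]; rfl
    have hE121 : extendPerm (2 * N) (t1 * t2 * t1)
        = ⇑(Equiv.swap k (k + 1) * Equiv.swap (k + 1) (k + 2) * Equiv.swap k (k + 1)) := by
      rw [extendPerm_mul, extendPerm_mul, hE1, hE2]; rfl
    -- the polynomial identity for the six terms
    have hpoly : MvPolynomial.rename (extendPerm (2 * N) 1) (spechtTransNN N T)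
        + MvPolynomial.rename (extendPerm (2 * N) t1) (spechtTransNN N T)
        + MvPolynomial.rename (extendPerm (2 * N) t2) (spechtTransNN N T)
        + MvPolynomial.rename (extendPerm (2 * N) (t1 * t2)) (spechtTransNN N T)
        + MvPolynomial.rename (extendPerm (2 * N) (t2 * t1)) (spechtTransNN N T)
        + MvPolynomial.rename (extendPerm (2 * N) (t1 * t2 * t1)) (spechtTransNN N T) = 0 := by
      rw [hQ, extendPerm_one, hE1, hE2, hE12, hE21, hE121]
      rw [show (⇑(1 : Equiv.Perm ℕ) : ℕ → ℕ) = id from rfl] at hsix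
      exact hsix
    have hsum := congrArg (evalAt (2 * N) x) hpoly
    rw [evalAt] at hsum
    simp only [map_add, map_zero] at hsum
    -- signs
    have hs1 : ((Equiv.Perm.sign (1 : Equiv.Perm (Fin (2 * N))) : ℤ) : ℝ) = 1 := by simp
    have hst1 : ((Equiv.Perm.sign t1 : ℤ) : ℝ) = -1 := by
      rw [ht1, Equiv.Perm.sign_swap hne1]; simp
    have hst2 : ((Equiv.Perm.sign t2 : ℤ) : ℝ) = -1 := by
      rw [ht2, Equiv.Perm.sign_swap hne2]; simp
    have hst12 : ((Equiv.Perm.sign (t1 * t2) : ℤ) : ℝ) = 1 := by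
      rw [map_mul]; push_cast [ht1, ht2, Equiv.Perm.sign_swap hne1, Equiv.Perm.sign_swap hne2]
      norm_num
    have hst21 : ((Equiv.Perm.sign (t2 * t1) : ℤ) : ℝ) = 1 := by
      rw [map_mul]; push_cast [ht1, ht2, Equiv.Perm.sign_swap hne1, Equiv.Perm.sign_swap hne2]
      norm_num
    have hst121 : ((Equiv.Perm.sign (t1 * t2 * t1) : ℤ) : ℝ) = -1 := by
      rw [map_mul, map_mul]
      push_cast [ht1, ht2, Equiv.Perm.sign_swap hne1, Equiv.Perm.sign_swap hne2]
      norm_num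
    have hgdef : ∀ σ : Equiv.Perm (Fin (2 * N)), g σ =
        ((Equiv.Perm.sign σ : ℤ) : ℝ) *
          evalAt (2 * N) x
            (MvPolynomial.rename (extendPerm (2 * N) σ) (spechtTransNN N T)) /
          Real.sqrt (vandProd (2 * N) x) := fun σ => rfl
    rw [hgdef 1, hgdef t1, hgdef t2, hgdef (t1 * t2), hgdef (t2 * t1), hgdef (t1 * t2 * t1),
      hs1, hst1, hst2, hst12, hst21, hst121]
    rw [evalAt]
    linear_combination hsum / Real.sqrt (vandProd (2 * N) x)
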